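/- In the EUC formulation, if (w*, y*, z*, θ*, q*, φ*) is a feasible solution with w*, y*, z* binary, then the mapped solution (x*, u*, v*, e*) defined by the aggregation formulas satisfies the generation bounds P̲_s u*_s ≤ x*_s ≤ P̄_s u*_s for all times s. -/
import Mathlib


open Finset

/-- In the EUC formulation, if `(w*, y*, z*, θ*, q*, φ*)` is feasible
with `w*, y*, z*` binary, then the aggregated solution satisfies the generation
bounds `P̲_s u*_s ≤ x*_s ≤ P̄_s u*_s` for all times `s`. -/
theorem stmt11 (T : ℕ) (TK1 TK2 : Finset (ℕ × ℕ)) (Pl Pu : ℕ → ℝ)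
    (w θ : ℕ → ℝ) (y z : ℕ × ℕ → ℝ) (q : ℕ × ℕ → ℕ → ℝ)
    -- first on-intervals start at time 1
    (hTK1 : ∀ pr ∈ TK1, pr.1 = 1)
    -- `w*, y*, z*` binary
    (hwbin : ∀ k, w k = 0 ∨ w k = 1)
    (hybin : ∀ pr, y pr = 0 ∨ y pr = 1)
    (hzbin : ∀ pr, z pr = 0 ∨ z pr = 1)
    -- per-interval generation bounds of the EUC formulation
    (hb1 : ∀ pr ∈ TK1, ∀ s, pr.1 ≤ s → s ≤ pr.2 →
      Pl s * w pr.2 ≤ q pr s ∧ q pr s ≤ Pu s * w pr.2)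
    (hb2 : ∀ pr ∈ TK2, ∀ s, pr.1 ≤ s → s ≤ pr.2 →
      Pl s * y pr ≤ q pr s ∧ q pr s ≤ Pu s * y pr) :
    ∀ s, 1 ≤ s → s ≤ T →
      Pl s * ((∑ pr ∈ TK1.filter (fun pr => s ≤ pr.2), w pr.2)
          + ∑ pr ∈ TK2.filter (fun pr => pr.1 ≤ s ∧ s ≤ pr.2), y pr)
        ≤ (∑ pr ∈ TK1.filter (fun pr => pr.1 ≤ s ∧ s ≤ pr.2), q pr s)
          + (∑ pr ∈ TK2.filter (fun pr => pr.1 ≤ s ∧ s ≤ pr.2), q pr s) ∧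
      (∑ pr ∈ TK1.filter (fun pr => pr.1 ≤ s ∧ s ≤ pr.2), q pr s)
          + (∑ pr ∈ TK2.filter (fun pr => pr.1 ≤ s ∧ s ≤ pr.2), q pr s)
        ≤ Pu s * ((∑ pr ∈ TK1.filter (fun pr => s ≤ pr.2), w pr.2)
          + ∑ pr ∈ TK2.filter (fun pr => pr.1 ≤ s ∧ s ≤ pr.2), y pr) := by
  intro s hs1 hsT
  have hfeq : TK1.filter (fun pr => s ≤ pr.2)
      = TK1.filter (fun pr => pr.1 ≤ s ∧ s ≤ pr.2) := by
    apply Finset.filter_congr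
    intro pr hpr
    have h1 := hTK1 pr hpr
    simp [h1, hs1]
  rw [hfeq, mul_add, mul_add, Finset.mul_sum, Finset.mul_sum, Finset.mul_sum, Finset.mul_sum]
  constructor
  · gcongr with pr hpr pr hpr <;> simp only [Finset.mem_filter] at hpr
    · exact (hb1 pr hpr.1 s hpr.2.1 hpr.2.2).1
    · exact (hb2 pr hpr.1 s hpr.2.1 hpr.2.2).1
  · gcongr with pr hpr pr hpr <;> simp only [Finset.mem_filter] at hpr
    · exact (hb1 pr hpr.1 s hpr.2.1 hpr.2.2).2
    · exact (hb2 pr hpr.1 s hpr.2.1 hpr.2.2).2
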